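/- (Proposition 2, 3d reciprocity over a closed vortex filament.) Let ω : ℝ³ → ℝ³ be continuously differentiable, let T > 0, and let γ : ℝ → ℝ³ be a T-periodic continuously differentiable curve satisfying γ'(t) = ω(γ(t)) for all t (a closed vortex filament). Let a, c ∈ ℝ³ be points not on the curve (a, c ∉ range γ) with a ≠ c. For each t, with ωb := ω(γ(t)), define E_a(t) := d/ds at s = 0 of I(ωb + s·Wa(t), ω(c), c − (γ(t) + s·K(a, ω(a), γ(t)))) where Wa(t) := (Fréchet derivative at γ(t) of x ↦ K(a, ω(a), x)) applied to ωb, and define E_c(t) symmetrically with a and c interchanged. Then ∫₀ᵀ (E_a(t) + E_c(t)) dt = 0. That is, a's action on the filament affects the interaction energy between the filament and c in an exactly equal and opposite way as c's action on the filament affects the interaction energy between a and the filament. -/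

import Mathlib

open MeasureTheory Real
open scoped RealInnerProductSpace

noncomputable section

/-- The cross product on `EuclideanSpace ℝ (Fin 3)`. -/
def cross (u v : EuclideanSpace ℝ (Fin 3)) : EuclideanSpace ℝ (Fin 3) :=
  (WithLp.equiv 2 (Fin 3 → ℝ)).symm
    ![u 1 * v 2 - u 2 * v 1, u 2 * v 0 - u 0 * v 2, u 0 * v 1 - u 1 * v 0]

/-- The Biot-Savart velocity induced at `x` by a point vortex at `p` with vorticity `w`:
`K(p, w, x) = (1/(4π))·(w × (x − p))/‖x − p‖³`. -/
def K (p w x : EuclideanSpace ℝ (Fin 3)) : EuclideanSpace ℝ (Fin 3) :=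
  (1 / (4 * π)) • ((‖x - p‖ ^ 3)⁻¹ • cross w (x - p))

/-- The interaction energy of vorticity vectors `u, v` at displacement `d`:
`I(u, v, d) = (1/(16π‖d‖))·(⟨u, v⟩ + ⟨u, d⟩⟨v, d⟩/‖d‖²)`. -/
def Ienergy (u v d : EuclideanSpace ℝ (Fin 3)) : ℝ :=
  (1 / (16 * π * ‖d‖)) * (⟪u, v⟫ + ⟪u, d⟫ * ⟪v, d⟫ / ‖d‖ ^ 2)

/-! ### Auxiliary machinery -/

/-- Explicit formula for the derivative of `t ↦ Ienergy (u t) v (d t)` along directions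
`W = u'` and `h = d'`. -/
def DI (u v d W h : EuclideanSpace ℝ (Fin 3)) : ℝ :=
  (1/(16*π)) * (⟪W,v⟫ / ‖d‖ + ⟪W,d⟫*⟪v,d⟫/‖d‖^3)
  + (1/(16*π)) * ((⟪u,h⟫*⟪v,d⟫ + ⟪u,d⟫*⟪v,h⟫ - ⟪u,v⟫*⟪d,h⟫)/‖d‖^3
      - 3*⟪u,d⟫*⟪v,d⟫*⟪d,h⟫/‖d‖^5)

lemma inner3 (u v : EuclideanSpace ℝ (Fin 3)) : ⟪u, v⟫ = u 0 * v 0 + u 1 * v 1 + u 2 * v 2 := by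
  simp [PiLp.inner_apply, Fin.sum_univ_three, mul_comm]

lemma cross_c0 (u v : EuclideanSpace ℝ (Fin 3)) : cross u v 0 = u 1 * v 2 - u 2 * v 1 := rfl
lemma cross_c1 (u v : EuclideanSpace ℝ (Fin 3)) : cross u v 1 = u 2 * v 0 - u 0 * v 2 := rfl
lemma cross_c2 (u v : EuclideanSpace ℝ (Fin 3)) : cross u v 2 = u 0 * v 1 - u 1 * v 0 := rfl
lemma smul_c (r : ℝ) (x : EuclideanSpace ℝ (Fin 3)) (i : Fin 3) : (r • x) i = r * x i := rfl
lemma neg_c (x : EuclideanSpace ℝ (Fin 3)) (i : Fin 3) : (-x) i = -(x i) := rfl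

lemma hasDerivAt_norm_comp {d : ℝ → EuclideanSpace ℝ (Fin 3)} {h : EuclideanSpace ℝ (Fin 3)}
    {t : ℝ} (hd : HasDerivAt d h t) (h0 : d t ≠ 0) :
    HasDerivAt (fun s => ‖d s‖) (⟪d t, h⟫ / ‖d t‖) t := by
  have hq : HasDerivAt (fun s => ⟪d s, d s⟫) (⟪d t, h⟫ + ⟪h, d t⟫) t := hd.inner ℝ hd
  have hne : ⟪d t, d t⟫ ≠ 0 := inner_self_ne_zero.mpr h0
  have := hq.sqrt hne
  have hsq : ∀ x : EuclideanSpace ℝ (Fin 3), Real.sqrt ⟪x, x⟫ = ‖x‖ := by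
    intro x
    rw [real_inner_self_eq_norm_sq, Real.sqrt_sq (norm_nonneg x)]
  simp only [hsq] at this
  convert this using 1
  rw [real_inner_comm (d t) h]
  have hn : ‖d t‖ ≠ 0 := norm_ne_zero_iff.mpr h0
  field_simp
  ring

/-- Derivative of the interaction energy along curves in the first and third slots. -/
lemma hasDerivAt_Ienergy {u d : ℝ → EuclideanSpace ℝ (Fin 3)} {W h : EuclideanSpace ℝ (Fin 3)}
    {v : EuclideanSpace ℝ (Fin 3)} {t : ℝ} (hu : HasDerivAt u W t) (hd : HasDerivAt d h t)
    (h0 : d t ≠ 0) :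
    HasDerivAt (fun s => Ienergy (u s) v (d s)) (DI (u t) v (d t) W h) t := by
  have hn := hasDerivAt_norm_comp hd h0
  have hnne : ‖d t‖ ≠ 0 := norm_ne_zero_iff.mpr h0
  have hπ : (16 * π * ‖d t‖) ≠ 0 := by positivity
  have hA : HasDerivAt (fun s => 16 * π * ‖d s‖) (16 * π * (⟪d t, h⟫ / ‖d t‖)) t :=
    hn.const_mul _
  have hB := hA.inv hπ
  have h1 : HasDerivAt (fun s => ⟪u s, v⟫) (⟪W, v⟫) t := by
    simpa using hu.inner ℝ (hasDerivAt_const t v)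
  have hC : HasDerivAt (fun s => ⟪u s, d s⟫) (⟪u t, h⟫ + ⟪W, d t⟫) t := hu.inner ℝ hd
  have hD : HasDerivAt (fun s => ⟪v, d s⟫) (⟪v, h⟫) t := by
    simpa using (hasDerivAt_const t v).inner ℝ hd
  have hE : HasDerivAt (fun s => ‖d s‖ ^ 2) (2 * ‖d t‖ ^ 1 * (⟪d t, h⟫ / ‖d t‖)) t := hn.pow 2
  have hF := (hC.mul hD).div hE (pow_ne_zero 2 hnne)
  have hG := hB.mul (h1.add hF)
  have : (fun s => Ienergy (u s) v (d s))
      = fun s => (16 * π * ‖d s‖)⁻¹ * (⟪u s, v⟫ + ⟪u s, d s⟫ * ⟪v, d s⟫ / ‖d s‖ ^ 2) := by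
    funext s; simp [Ienergy, one_div]
  rw [this]
  refine hG.congr_deriv (Eq.symm ?_)
  simp only [DI, pow_one, Pi.mul_apply, Pi.add_apply, Pi.div_apply, Pi.inv_apply]
  have hπ0 : π ≠ 0 := pi_ne_zero
  field_simp
  ring

lemma contDiff_cross_right (w : EuclideanSpace ℝ (Fin 3)) (n : ℕ∞) :
    ContDiff ℝ n (fun y : EuclideanSpace ℝ (Fin 3) => cross w y) := by
  have hco : ∀ j : Fin 3, ContDiff ℝ n (fun y : EuclideanSpace ℝ (Fin 3) => y j) :=
    fun j => (contDiff_euclidean.mp contDiff_id) j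
  refine contDiff_euclidean.mpr fun i => ?_
  fin_cases i
  · exact (contDiff_const.mul (hco 2)).sub (contDiff_const.mul (hco 1))
  · exact (contDiff_const.mul (hco 0)).sub (contDiff_const.mul (hco 2))
  · exact (contDiff_const.mul (hco 1)).sub (contDiff_const.mul (hco 0))

lemma contDiffAt_K (p w x : EuclideanSpace ℝ (Fin 3)) (hx : x ≠ p) :
    ContDiffAt ℝ 2 (K p w) x := by
  have hsub : ContDiffAt ℝ 2 (fun y : EuclideanSpace ℝ (Fin 3) => y - p) x :=
    contDiffAt_id.sub contDiffAt_const
  have hne : x - p ≠ 0 := sub_ne_zero.mpr hx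
  have hnorm : ContDiffAt ℝ 2 (fun y => ‖y - p‖) x := hsub.norm ℝ hne
  have hpow : ContDiffAt ℝ 2 (fun y => ‖y - p‖ ^ 3) x := hnorm.pow 3
  have hinv : ContDiffAt ℝ 2 (fun y => (‖y - p‖ ^ 3)⁻¹) x :=
    hpow.inv (pow_ne_zero 3 (norm_ne_zero_iff.mpr hne))
  have hcross : ContDiffAt ℝ 2 (fun y => cross w (y - p)) x :=
    (contDiff_cross_right w 2).contDiffAt.comp x hsub
  exact (hinv.smul hcross).const_smul _

lemma hasDerivAt_K_comp {γ : ℝ → EuclideanSpace ℝ (Fin 3)} {v : EuclideanSpace ℝ (Fin 3)}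
    {t : ℝ} (hγ : HasDerivAt γ v t) (p w : EuclideanSpace ℝ (Fin 3)) (hne : γ t ≠ p) :
    HasDerivAt (fun s => K p w (γ s)) (fderiv ℝ (K p w) (γ t) v) t :=
  (((contDiffAt_K p w (γ t) hne).differentiableAt two_ne_zero).hasFDerivAt).comp_hasDerivAt t hγ

lemma contDiffOn_K (p w : EuclideanSpace ℝ (Fin 3)) :
    ContDiffOn ℝ 2 (K p w) {x | x ≠ p} :=
  fun x hx => (contDiffAt_K p w x hx).contDiffWithinAt

lemma continuousOn_fderiv_K (p w : EuclideanSpace ℝ (Fin 3)) :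
    ContinuousOn (fun x => fderiv ℝ (K p w) x) {x | x ≠ p} :=
  ((contDiffOn_K p w).fderiv_of_isOpen isOpen_ne
    (le_refl ((1 : WithTop ℕ∞) + 1))).continuousOn

set_option maxHeartbeats 2000000 in
/-- The key algebraic reciprocity identity. -/
lemma keyB (u v v' W W' da dc Va Vc : EuclideanSpace ℝ (Fin 3)) (hda : da ≠ 0) (hdc : dc ≠ 0)
    (hVa : Va = (1/(4*π)) • ((‖da‖^3)⁻¹ • cross v' (-da)))
    (hVc : Vc = (1/(4*π)) • ((‖dc‖^3)⁻¹ • cross v (-dc))) :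
    DI u v dc W (-Va) + DI u v' da W' (-Vc) = DI Va v dc W (-u) + DI Vc v' da W' (-u) := by
  have hra : ‖da‖ ≠ 0 := norm_ne_zero_iff.mpr hda
  have hrc : ‖dc‖ ≠ 0 := norm_ne_zero_iff.mpr hdc
  have hπ : π ≠ 0 := pi_ne_zero
  subst hVa hVc
  simp only [DI, inner3, cross_c0, cross_c1, cross_c2, smul_c, neg_c]
  field_simp
  ring

lemma continuous_DI {u d W h : ℝ → EuclideanSpace ℝ (Fin 3)} {v : EuclideanSpace ℝ (Fin 3)}
    (hu : Continuous u) (hd : Continuous d) (hW : Continuous W) (hh : Continuous h)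
    (h0 : ∀ t, d t ≠ 0) : Continuous (fun t => DI (u t) v (d t) (W t) (h t)) := by
  have hv : Continuous (fun _ : ℝ => v) := continuous_const
  have hn : Continuous fun t => ‖d t‖ := hd.norm
  have hn0 : ∀ t, ‖d t‖ ≠ 0 := fun t => norm_ne_zero_iff.mpr (h0 t)
  have h3 : ∀ t, ‖d t‖ ^ 3 ≠ 0 := fun t => pow_ne_zero _ (hn0 t)
  have h5 : ∀ t, ‖d t‖ ^ 5 ≠ 0 := fun t => pow_ne_zero _ (hn0 t)
  refine Continuous.add (continuous_const.mul (Continuous.add ?_ ?_))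
    (continuous_const.mul (Continuous.sub ?_ ?_))
  · exact (hW.inner hv).div hn hn0
  · exact ((hW.inner hd).mul (hv.inner hd)).div (hn.pow 3) h3
  · exact ((((hu.inner hh).mul (hv.inner hd)).add
      ((hu.inner hd).mul (hv.inner hh))).sub ((hu.inner hv).mul (hd.inner hh))).div (hn.pow 3) h3
  · exact (((continuous_const.mul (hu.inner hd)).mul
      (hv.inner hd)).mul (hd.inner hh)).div (hn.pow 5) h5

/-- Proposition 2 (3d reciprocity over a closed vortex filament): for a closed
vorticity streamline `γ` and points `a, c` off the filament, the total effect of `a`'s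
action on the filament on the interaction energy with `c`, plus the total effect of
`c`'s action on the filament on the interaction energy with `a`, vanishes. -/
theorem filament_reciprocity (ω : EuclideanSpace ℝ (Fin 3) → EuclideanSpace ℝ (Fin 3))
    (hω : ContDiff ℝ 1 ω) (T : ℝ) (hT : 0 < T) (γ : ℝ → EuclideanSpace ℝ (Fin 3))
    (hper : Function.Periodic γ T) (hγ : ∀ t, HasDerivAt γ (ω (γ t)) t)
    (a c : EuclideanSpace ℝ (Fin 3)) (ha : a ∉ Set.range γ) (hc : c ∉ Set.range γ)
    (hac : a ≠ c) :
    ∫ t in (0 : ℝ)..T,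
        (deriv (fun s : ℝ =>
            Ienergy (ω (γ t) + s • (fderiv ℝ (K a (ω a)) (γ t) (ω (γ t)))) (ω c)
              (c - (γ t + s • K a (ω a) (γ t)))) 0 +
          deriv (fun s : ℝ =>
            Ienergy (ω (γ t) + s • (fderiv ℝ (K c (ω c)) (γ t) (ω (γ t)))) (ω a)
              (a - (γ t + s • K c (ω c) (γ t)))) 0) = 0 := by
  have hγa : ∀ t, γ t ≠ a := fun t h => ha ⟨t, h⟩
  have hγc : ∀ t, γ t ≠ c := fun t h => hc ⟨t, h⟩
  have hda : ∀ t, a - γ t ≠ 0 := fun t => sub_ne_zero.mpr fun h => hγa t h.symm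
  have hdc : ∀ t, c - γ t ≠ 0 := fun t => sub_ne_zero.mpr fun h => hγc t h.symm
  -- abbreviations
  set Wa : ℝ → EuclideanSpace ℝ (Fin 3) := fun t => fderiv ℝ (K a (ω a)) (γ t) (ω (γ t)) with hWa
  set Wc : ℝ → EuclideanSpace ℝ (Fin 3) := fun t => fderiv ℝ (K c (ω c)) (γ t) (ω (γ t)) with hWc
  set Va : ℝ → EuclideanSpace ℝ (Fin 3) := fun t => K a (ω a) (γ t) with hVa
  set Vc : ℝ → EuclideanSpace ℝ (Fin 3) := fun t => K c (ω c) (γ t) with hVc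
  -- Step 1 : computing the pointwise derivatives in the integrand
  have deriv_gen : ∀ (t : ℝ) (W KA v : EuclideanSpace ℝ (Fin 3)) (x : EuclideanSpace ℝ (Fin 3)),
      v - γ t ≠ 0 →
      deriv (fun s : ℝ => Ienergy (ω (γ t) + s • W) x (v - (γ t + s • KA))) 0
        = DI (ω (γ t)) x (v - γ t) W (-KA) := by
    intro t W KA v x hne
    have hu : HasDerivAt (fun s : ℝ => ω (γ t) + s • W) W 0 := by
      simpa using ((hasDerivAt_id (0:ℝ)).smul_const W).const_add (ω (γ t))
    have hd : HasDerivAt (fun s : ℝ => v - (γ t + s • KA)) (-KA) 0 := by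
      simpa using (((hasDerivAt_id (0:ℝ)).smul_const KA).const_add (γ t)).const_sub v
    have h0 : (fun s : ℝ => v - (γ t + s • KA)) 0 ≠ 0 := by simpa using hne
    have := (hasDerivAt_Ienergy (v := x) hu hd h0).deriv
    simpa using this
  -- Step 2 : the antiderivative
  set H : ℝ → ℝ := fun t =>
    Ienergy (Va t) (ω c) (c - γ t) + Ienergy (Vc t) (ω a) (a - γ t) with hH
  have hHDeriv2 : ∀ t : ℝ, HasDerivAt H
      (DI (Va t) (ω c) (c - γ t) (Wa t) (-(ω (γ t)))
        + DI (Vc t) (ω a) (a - γ t) (Wc t) (-(ω (γ t)))) t := by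
    intro t
    have h1 := hasDerivAt_Ienergy (v := ω c)
      (hasDerivAt_K_comp (hγ t) a (ω a) (hγa t)) ((hγ t).const_sub c) (hdc t)
    have h2 := hasDerivAt_Ienergy (v := ω a)
      (hasDerivAt_K_comp (hγ t) c (ω c) (hγc t)) ((hγ t).const_sub a) (hda t)
    exact h1.add h2
  -- Step 3 : pointwise identity between the integrand and H'
  have hKform : ∀ t : ℝ, Va t = (1/(4*π)) • ((‖a - γ t‖^3)⁻¹ • cross (ω a) (-(a - γ t))) := by
    intro t
    simp only [hVa, K, neg_sub]
    rw [norm_sub_rev]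
  have hKform' : ∀ t : ℝ, Vc t = (1/(4*π)) • ((‖c - γ t‖^3)⁻¹ • cross (ω c) (-(c - γ t))) := by
    intro t
    simp only [hVc, K, neg_sub]
    rw [norm_sub_rev]
  have hpoint : ∀ t : ℝ,
      DI (ω (γ t)) (ω c) (c - γ t) (Wa t) (-(Va t))
        + DI (ω (γ t)) (ω a) (a - γ t) (Wc t) (-(Vc t))
      = DI (Va t) (ω c) (c - γ t) (Wa t) (-(ω (γ t)))
        + DI (Vc t) (ω a) (a - γ t) (Wc t) (-(ω (γ t))) := by
    intro t
    exact keyB (ω (γ t)) (ω c) (ω a) (Wa t) (Wc t) (a - γ t) (c - γ t) (Va t) (Vc t)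
      (hda t) (hdc t) (hKform t) (hKform' t)
  -- Step 4 : continuity of the integrand
  have hγcont : Continuous γ := by
    rw [continuous_iff_continuousAt]; exact fun t => (hγ t).continuousAt
  have hωcont : Continuous ω := hω.continuous
  have hωγ : Continuous fun t => ω (γ t) := hωcont.comp hγcont
  have hWacont : Continuous Wa := by
    have hF : Continuous fun t => fderiv ℝ (K a (ω a)) (γ t) :=
      (continuousOn_fderiv_K a (ω a)).comp_continuous hγcont (fun t => hγa t)
    exact hF.clm_apply hωγ
  have hWccont : Continuous Wc := by
    have hF : Continuous fun t => fderiv ℝ (K c (ω c)) (γ t) :=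
      (continuousOn_fderiv_K c (ω c)).comp_continuous hγcont (fun t => hγc t)
    exact hF.clm_apply hωγ
  have hVacont : Continuous Va :=
    ((contDiffOn_K a (ω a)).continuousOn).comp_continuous hγcont (fun t => hγa t)
  have hVccont : Continuous Vc :=
    ((contDiffOn_K c (ω c)).continuousOn).comp_continuous hγcont (fun t => hγc t)
  set G : ℝ → ℝ := fun t =>
    DI (ω (γ t)) (ω c) (c - γ t) (Wa t) (-(Va t))
      + DI (ω (γ t)) (ω a) (a - γ t) (Wc t) (-(Vc t)) with hG
  have hGcont : Continuous G := by
    refine Continuous.add ?_ ?_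
    · exact continuous_DI hωγ (continuous_const.sub hγcont) hWacont hVacont.neg hdc
    · exact continuous_DI hωγ (continuous_const.sub hγcont) hWccont hVccont.neg hda
  -- Step 5 : rewrite the integrand as G
  have hint : ∀ t : ℝ,
      (deriv (fun s : ℝ =>
            Ienergy (ω (γ t) + s • (fderiv ℝ (K a (ω a)) (γ t) (ω (γ t)))) (ω c)
              (c - (γ t + s • K a (ω a) (γ t)))) 0 +
          deriv (fun s : ℝ =>
            Ienergy (ω (γ t) + s • (fderiv ℝ (K c (ω c)) (γ t) (ω (γ t)))) (ω a)
              (a - (γ t + s • K c (ω c) (γ t)))) 0) = G t := by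
    intro t
    rw [deriv_gen t (Wa t) (Va t) c (ω c) (hdc t),
      deriv_gen t (Wc t) (Vc t) a (ω a) (hda t)]
  -- Step 6 : FTC and periodicity
  have hInteg : IntervalIntegrable G volume 0 T := hGcont.intervalIntegrable 0 T
  have hHG : ∀ t ∈ Set.uIcc (0:ℝ) T, HasDerivAt H (G t) t := by
    intro t _
    rw [hG]
    simp only
    rw [hpoint t]
    exact hHDeriv2 t
  have hFTC := intervalIntegral.integral_eq_sub_of_hasDerivAt hHG hInteg
  have hintegral : (∫ t in (0:ℝ)..T, G t) = H T - H 0 := hFTC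
  have hHper : H T = H 0 := by
    have hγT : γ T = γ 0 := by simpa using hper 0
    simp [hH, hVa, hVc, hγT]
  calc ∫ t in (0:ℝ)..T,
        (deriv (fun s : ℝ =>
            Ienergy (ω (γ t) + s • (fderiv ℝ (K a (ω a)) (γ t) (ω (γ t)))) (ω c)
              (c - (γ t + s • K a (ω a) (γ t)))) 0 +
          deriv (fun s : ℝ =>
            Ienergy (ω (γ t) + s • (fderiv ℝ (K c (ω c)) (γ t) (ω (γ t)))) (ω a)
              (a - (γ t + s • K c (ω c) (γ t)))) 0)
      = ∫ t in (0:ℝ)..T, G t := by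
        refine intervalIntegral.integral_congr fun t _ => hint t
    _ = H T - H 0 := hintegral
    _ = 0 := by rw [hHper]; ring
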